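/- arXiv:1409.5620 — 2 statements merged into one kernel-verified Lean document; each statement's English description precedes it below -/
import Mathlib

section
/- (Strong locality in D(div), part (i).) Let b ∈ D(div)(X,d,m). Then for every pair of Lipschitz functions f, g on X one has b(f) = b(g) m-almost everywhere on the set {x ∈ X : f(x) = g(x)}. -/
open MeasureTheory Metric Filter Set
open scoped ENNReal NNReal Topology

noncomputable section

namespace DiMarino

/-- Real Lipschitz functions on `X` with bounded support. -/
def Lip0 (X : Type*) [MetricSpace X] : Set (X → ℝ) :=
  {f | (∃ K, LipschitzWith K f) ∧ Bornology.IsBounded (tsupport f)}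

/-- Bounded real Lipschitz functions on `X`. -/
def LipB (X : Type*) [MetricSpace X] : Set (X → ℝ) :=
  {f | (∃ K, LipschitzWith K f) ∧ ∃ M, ∀ x, |f x| ≤ M}

variable {X : Type*} [MetricSpace X]

/-- The Lipschitz constant of `f` on the set `s`, as an element of `ℝ≥0∞`. -/
def lipOn (f : X → ℝ) (s : Set X) : ℝ≥0∞ :=
  ⨆ x ∈ s, ⨆ y ∈ s, edist (f x) (f y) / edist x y

/-- The asymptotic Lipschitz constant `lip_a f (x) = lim_{r→0⁺} Lip (f, B_r(x))`
(the limit is an infimum by monotonicity). -/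
def lipA (f : X → ℝ) (x : X) : ℝ :=
  (⨅ (r : ℝ) (_ : 0 < r), lipOn f (ball x r)).toReal

/-- The asymptotic Lipschitz constant of the restriction `f|_C` at `x`. -/
def lipAOn (f : X → ℝ) (C : Set X) (x : X) : ℝ :=
  (⨅ (r : ℝ) (_ : 0 < r), lipOn f (C ∩ ball x r)).toReal

variable [MeasurableSpace X]

/-- A metric derivation: a linear map from `Lip_0(X,d)` to `L^0(X,m)` satisfying the
Leibniz rule and weak locality `|b(f)| ≤ g · lip_a f`. -/
structure MDerivation (X : Type*) [MetricSpace X] [MeasurableSpace X]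
    (m : Measure X) where
  toFun : (X → ℝ) → X → ℝ
  aemeasurable' : ∀ f ∈ Lip0 X, AEMeasurable (toFun f) m
  map_add' : ∀ f ∈ Lip0 X, ∀ g ∈ Lip0 X, toFun (f + g) =ᵐ[m] toFun f + toFun g
  map_smul' : ∀ (c : ℝ), ∀ f ∈ Lip0 X, toFun (c • f) =ᵐ[m] c • toFun f
  leibniz' : ∀ f ∈ Lip0 X, ∀ g ∈ Lip0 X,
    toFun (f * g) =ᵐ[m] toFun f * g + f * toFun g
  locality' : ∃ g : X → ℝ, AEMeasurable g m ∧ (∀ᵐ x ∂m, 0 ≤ g x) ∧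
    ∀ f ∈ Lip0 X, ∀ᵐ x ∂m, |toFun f x| ≤ g x * lipA f x

/-- `g` is a locality function for the derivation `b`, i.e. `|b(f)| ≤ g · lip_a f`
`m`-a.e. for every `f ∈ Lip_0(X,d)`. -/
def IsLocality (m : Measure X) (b : MDerivation X m) (g : X → ℝ) : Prop :=
  AEMeasurable g m ∧ (∀ᵐ x ∂m, 0 ≤ g x) ∧
    ∀ f ∈ Lip0 X, ∀ᵐ x ∂m, |b.toFun f x| ≤ g x * lipA f x

/-- `g` is the (`m`-a.e.) minimal locality function of `b`; it is denoted `|b|`. -/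
def IsMinimalLocality (m : Measure X) (b : MDerivation X m) (g : X → ℝ) : Prop :=
  IsLocality m b g ∧ ∀ g', IsLocality m b g' → ∀ᵐ x ∂m, g x ≤ g' x

/-- `h` is the divergence of the derivation `b`:
`-∫ b(f) dm = ∫ h f dm` for every `f ∈ Lip_0(X,d)`. -/
def IsDivergence (m : Measure X) (b : MDerivation X m) (h : X → ℝ) : Prop :=
  AEMeasurable h m ∧ ∀ f ∈ Lip0 X, Integrable (b.toFun f) m ∧
    Integrable (fun x => h x * f x) m ∧
    (-∫ x, b.toFun f x ∂m) = ∫ x, h x * f x ∂m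

/-- `Der^{p₁}_{p₂}(X,d,m)`: derivations with `|b| ∈ L^{p₁}` and `div b ∈ L^{p₂}`. -/
def DerSet (m : Measure X) (p₁ p₂ : ℝ≥0∞) : Set (MDerivation X m) :=
  {b | (∃ g, IsLocality m b g ∧ MemLp g p₁ m) ∧ ∃ h, MemLp h p₂ m ∧ IsDivergence m b h}

/-- `Der_b`: derivations with `|b| ∈ L^∞`. -/
def DerB (m : Measure X) : Set (MDerivation X m) :=
  {b | ∃ g, IsLocality m b g ∧ MemLp g ∞ m}

/-- `L^1_loc` in a metric measure space: integrable on bounded sets. -/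
def LocInt (m : Measure X) (g : X → ℝ) : Prop :=
  AEMeasurable g m ∧ ∀ s : Set X, Bornology.IsBounded s → IntegrableOn g s m

/-- `D(div)`: derivations with `|b|` and `div b` in `L^1_loc(X,m)`. -/
def DDiv (m : Measure X) : Set (MDerivation X m) :=
  {b | (∃ g, IsLocality m b g ∧ LocInt m g) ∧ ∃ h, LocInt m h ∧ IsDivergence m b h}

/-- `bu` represents the value `b(u)` of the canonical extension of the derivation `b`
to locally Lipschitz functions: on the interior of any set where a cutoff `χ ∈ Lip_0`
equals `1`, `b(u)` agrees with `b(χ·u)`. -/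
def IsExtension (m : Measure X) (b : MDerivation X m) (u : X → ℝ) (bu : X → ℝ) : Prop :=
  AEMeasurable bu m ∧
    ∀ χ ∈ Lip0 X, ∀ᵐ x ∂m, x ∈ interior {y | χ y = 1} → bu x = b.toFun (χ * u) x

/-- `C` is an admissible continuity constant for `L_f` with respect to the `Der^q` norm. -/
def ContBound (m : Measure X) (q : ℝ≥0∞) (Lf : MDerivation X m → X → ℝ) (C : ℝ) : Prop :=
  ∀ b ∈ DerSet m q q, ∀ g, IsLocality m b g →
    ∫ x, |Lf b x| ∂m ≤ C * (eLpNorm g q m).toReal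

/-- `L_f` realizes `f` as a Sobolev function: a linear, `Der^q`-norm continuous,
`Lip_b`-linear map `L_f : Der^q_q → L^1(X,m)` with
`∫ L_f(b) dm = -∫ f · div b dm`; for `p = 1` it moreover extends `L^∞`-linearly
to `L^∞ · Der_L`. -/
structure IsSobolevRep (m : Measure X) (p q : ℝ≥0∞) (f : X → ℝ)
    (Lf : MDerivation X m → X → ℝ) : Prop where
  integrable : ∀ b ∈ DerSet m q q, Integrable (Lf b) m
  ibp : ∀ b ∈ DerSet m q q, ∀ d, IsDivergence m b d →
    ∫ x, Lf b x ∂m = -∫ x, f x * d x ∂m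
  map_add : ∀ b₁ ∈ DerSet m q q, ∀ b₂ ∈ DerSet m q q, ∀ b₃ ∈ DerSet m q q,
    (∀ g ∈ Lip0 X, b₃.toFun g =ᵐ[m] b₁.toFun g + b₂.toFun g) →
    Lf b₃ =ᵐ[m] Lf b₁ + Lf b₂
  map_smul : ∀ (c : ℝ), ∀ b₁ ∈ DerSet m q q, ∀ b₂ ∈ DerSet m q q,
    (∀ g ∈ Lip0 X, b₂.toFun g =ᵐ[m] c • b₁.toFun g) → Lf b₂ =ᵐ[m] c • Lf b₁
  bounded : ∃ C : ℝ, 0 ≤ C ∧ ContBound m q Lf C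
  lipb_linear : ∀ h ∈ LipB X, ∀ b ∈ DerSet m q q, ∀ b' ∈ DerSet m q q,
    (∀ g ∈ Lip0 X, b'.toFun g =ᵐ[m] fun x => h x * b.toFun g x) →
    Lf b' =ᵐ[m] fun x => h x * Lf b x
  extend_one : p = 1 → ∃ Lf' : MDerivation X m → X → ℝ,
    (∀ b ∈ DerSet m ∞ ∞, Lf' b =ᵐ[m] Lf b) ∧
    ∀ u : X → ℝ, MemLp u ∞ m → ∀ b ∈ DerSet m ∞ ∞, ∀ b' : MDerivation X m,
      (∀ g ∈ Lip0 X, b'.toFun g =ᵐ[m] fun x => u x * b.toFun g x) →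
      Lf' b' =ᵐ[m] fun x => u x * Lf' b x

/-- `f ∈ W^{1,p}(X,d,m)` (definition via derivations). -/
def MemW1p (m : Measure X) (p q : ℝ≥0∞) (f : X → ℝ) : Prop :=
  MemLp f p m ∧ ∃ Lf, IsSobolevRep m p q f Lf

/-- `gf` dominates `L_f`: `|b(f)| ≤ gf · |b|` `m`-a.e. for every `b ∈ Der^q_q`. -/
def IsGradientBound (m : Measure X) (q : ℝ≥0∞) (Lf : MDerivation X m → X → ℝ)
    (gf : X → ℝ) : Prop :=
  ∀ b ∈ DerSet m q q, ∀ gb, IsMinimalLocality m b gb →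
    ∀ᵐ x ∂m, |Lf b x| ≤ gf x * gb x

/-- `gf` is the `p`-weak gradient `|∇f|_p` : the `m`-a.e. least nonnegative `L^p`
function with `|b(f)| ≤ gf · |b|` for all `b ∈ Der^q_q`. -/
def IsMinimalPGradient (m : Measure X) (p q : ℝ≥0∞) (Lf : MDerivation X m → X → ℝ)
    (gf : X → ℝ) : Prop :=
  MemLp gf p m ∧ (∀ᵐ x ∂m, 0 ≤ gf x) ∧ IsGradientBound m q Lf gf ∧
    ∀ gf', MemLp gf' p m → (∀ᵐ x ∂m, 0 ≤ gf' x) → IsGradientBound m q Lf gf' →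
      ∀ᵐ x ∂m, gf x ≤ gf' x

/-- `g` is a relaxed gradient of `f`: some `f_n ∈ Lip_0` converge to `f` in `L^p` with
`lip_a f_n → g` in `L^p`. -/
def IsRelaxedGradient (m : Measure X) (p : ℝ≥0∞) (f g : X → ℝ) : Prop :=
  MemLp g p m ∧ ∃ fn : ℕ → X → ℝ, (∀ n, fn n ∈ Lip0 X) ∧
    Tendsto (fun n => eLpNorm (fn n - f) p m) atTop (𝓝 0) ∧
    Tendsto (fun n => eLpNorm (fun x => lipA (fn n) x - g x) p m) atTop (𝓝 0)

/-- `f ∈ W^{1,p}_*(X,d,m)` (relaxed Sobolev space). -/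
def MemW1pStar (m : Measure X) (p : ℝ≥0∞) (f : X → ℝ) : Prop :=
  MemLp f p m ∧ ∃ g, IsRelaxedGradient m p f g

/-- `g = |∇f|_{p,*}`: a relaxed gradient of minimal `L^p` norm. -/
def IsMinimalRelaxedGradient (m : Measure X) (p : ℝ≥0∞) (f g : X → ℝ) : Prop :=
  IsRelaxedGradient m p f g ∧
    ∀ g', IsRelaxedGradient m p f g' → eLpNorm g p m ≤ eLpNorm g' p m

end DiMarino

/-- The curve space `C([0,1],X)` is endowed with the Borel σ-algebra of the sup metric. -/
instance {X : Type*} [MetricSpace X] : MeasurableSpace C(unitInterval, X) := borel _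
instance {X : Type*} [MetricSpace X] : BorelSpace C(unitInterval, X) := ⟨rfl⟩

namespace DiMarino

variable {X : Type*} [MetricSpace X]

/-- The canonical extension of a curve `γ : [0,1] → X` to `ℝ`, constant outside `[0,1]`. -/
def extC (γ : C(unitInterval, X)) : ℝ → X :=
  fun t => γ (Set.projIcc 0 1 zero_le_one t)

/-- `γ` has metric speed `v` at time `t`. -/
def HasMetricSpeedAt (γ : ℝ → X) (t v : ℝ) : Prop :=
  Tendsto (fun h : ℝ => dist (γ (t + h)) (γ t) / |h|) (𝓝[≠] 0) (𝓝 v)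

variable [MeasurableSpace X]

/-- `π` is a `q`-test plan with compression constant `Cpi`, and `spd γ t` is
the metric speed `|γ̇_t|`: `π` is a probability measure concentrated on `AC^q`
curves, with `q`-energy `‖ ‖γ̇‖_{L^q(0,1)} ‖_{L^q(π)}` finite and
`(e_t)_♯ π ≤ Cpi · m` for all `t ∈ [0,1]`. -/
structure IsTestPlan (m : Measure X) (q : ℝ≥0∞) (π : Measure C(unitInterval, X))
    (spd : C(unitInterval, X) → ℝ → ℝ) (Cpi : ℝ≥0∞) : Prop where
  prob : IsProbabilityMeasure π
  cfin : Cpi ≠ ∞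
  spd_meas : AEMeasurable (fun p : C(unitInterval, X) × ℝ => spd p.1 p.2)
    (π.prod (volume.restrict (Set.Ioo (0:ℝ) 1)))
  spd_nonneg : ∀ᵐ γ ∂π, ∀ᵐ t ∂(volume.restrict (Set.Ioo (0:ℝ) 1)), 0 ≤ spd γ t
  speed : ∀ᵐ γ ∂π, ∀ᵐ t ∂(volume.restrict (Set.Ioo (0:ℝ) 1)),
    HasMetricSpeedAt (extC γ) t (spd γ t)
  ac : ∀ᵐ γ ∂π, (∀ s t : ℝ, 0 ≤ s → s ≤ t → t ≤ 1 →
    IntegrableOn (spd γ) (Set.Ioc s t) volume ∧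
    dist (extC γ s) (extC γ t) ≤ ∫ u in Set.Ioc s t, spd γ u)
  energy : eLpNorm
    (fun γ => (eLpNorm (spd γ) q (volume.restrict (Set.Ioo (0:ℝ) 1))).toReal) q π < ∞
  compression : ∀ t : unitInterval, Measure.map (fun γ => γ t) π ≤ Cpi • m

/-- `g` is a `p`-weak upper gradient of `f`:
`|f(γ₁) - f(γ₀)| ≤ ∫_γ g ds < ∞` for `p`-a.e. curve, i.e. π-a.e. for all `q`-test plans. -/
def IsWeakUpperGradient (m : Measure X) (q : ℝ≥0∞) (f g : X → ℝ) : Prop :=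
  ∀ (π : Measure C(unitInterval, X)) (spd : C(unitInterval, X) → ℝ → ℝ) (Cpi : ℝ≥0∞),
    IsTestPlan m q π spd Cpi →
    ∀ᵐ γ ∂π, IntegrableOn (fun t => g (extC γ t) * spd γ t) (Set.Ioo (0:ℝ) 1) volume ∧
      |f (extC γ 1) - f (extC γ 0)| ≤ ∫ t in Set.Ioo (0:ℝ) 1, g (extC γ t) * spd γ t

/-- `f ∈ W^{1,p}_w(X,d,m)` (Sobolev space via weak upper gradients). -/
def MemW1pw (m : Measure X) (p q : ℝ≥0∞) (f : X → ℝ) : Prop :=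
  MemLp f p m ∧ ∃ g, MemLp g p m ∧ (∀ᵐ x ∂m, 0 ≤ g x) ∧ IsWeakUpperGradient m q f g

/-- `g = |∇f|_{p,w}`: the `m`-a.e. minimal `p`-weak upper gradient of `f`. -/
def IsMinimalWeakUpperGradient (m : Measure X) (p q : ℝ≥0∞) (f g : X → ℝ) : Prop :=
  MemLp g p m ∧ (∀ᵐ x ∂m, 0 ≤ g x) ∧ IsWeakUpperGradient m q f g ∧
    ∀ g', MemLp g' p m → (∀ᵐ x ∂m, 0 ≤ g' x) → IsWeakUpperGradient m q f g' →
      ∀ᵐ x ∂m, g x ≤ g' x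

/-- The upper semicontinuous envelope (relative to `m`-a.e. domination by bounded
continuous functions) of `g`. -/
def uscEnvAE (m : Measure X) (g : X → ℝ) (x : X) : ℝ :=
  sInf {y : ℝ | ∃ h : X → ℝ, Continuous h ∧ (∃ M, ∀ z, |h z| ≤ M) ∧
    (∀ᵐ z ∂m, g z ≤ h z) ∧ y = h x}

/-- `ν' = h · ν` for a signed measure `ν` and a function `h`. -/
def IsDensitySM (ν' ν : SignedMeasure X) (h : X → ℝ) : Prop :=
  ∀ A : Set X, MeasurableSet A →
    ν' A = (∫ x in A, h x ∂ν.toJordanDecomposition.posPart)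
      - ∫ x in A, h x ∂ν.toJordanDecomposition.negPart

/-- `L_f` realizes `f` as a `BV` function: a linear map `L_f : Der_b → M(X)`,
continuous for the `Der^∞` norm, `C_b(X)`-linear, with
`L_f(b)(X) = -∫ f · div b dm` for all `b ∈ Der_L`. -/
structure IsBVRep (m : Measure X) (f : X → ℝ)
    (Lf : MDerivation X m → SignedMeasure X) : Prop where
  ibp : ∀ b ∈ DerSet m ∞ ∞, ∀ d, IsDivergence m b d →
    Lf b Set.univ = -∫ x, f x * d x ∂m
  map_add : ∀ b₁ ∈ DerB m, ∀ b₂ ∈ DerB m, ∀ b₃ ∈ DerB m,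
    (∀ g ∈ Lip0 X, b₃.toFun g =ᵐ[m] b₁.toFun g + b₂.toFun g) → Lf b₃ = Lf b₁ + Lf b₂
  map_smul : ∀ (c : ℝ), ∀ b₁ ∈ DerB m, ∀ b₂ ∈ DerB m,
    (∀ g ∈ Lip0 X, b₂.toFun g =ᵐ[m] c • b₁.toFun g) → Lf b₂ = c • Lf b₁
  bounded : ∃ C : ℝ, 0 ≤ C ∧ ∀ b ∈ DerB m, ∀ g, IsLocality m b g →
    ((Lf b).totalVariation Set.univ).toReal ≤ C * (eLpNorm g ∞ m).toReal
  cb_linear : ∀ h : X → ℝ, Continuous h → (∃ M, ∀ x, |h x| ≤ M) →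
    ∀ b ∈ DerB m, ∀ b' ∈ DerB m,
      (∀ g ∈ Lip0 X, b'.toFun g =ᵐ[m] fun x => h x * b.toFun g x) →
      IsDensitySM (Lf b') (Lf b) h

/-- `f ∈ BV(X,d,m)` (definition via derivations). -/
def MemBV (m : Measure X) (f : X → ℝ) : Prop :=
  MemLp f 1 m ∧ ∃ Lf, IsBVRep m f Lf

/-- `ν` is a finite measure dominating `L_f`:
`Df(b)(A) ≤ ∫_A |b|^* dν` for every Borel `A` and `b ∈ Der_L`. -/
def IsTVBound (m : Measure X) (Lf : MDerivation X m → SignedMeasure X)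
    (ν : Measure X) : Prop :=
  IsFiniteMeasure ν ∧ ∀ A : Set X, MeasurableSet A → ∀ b ∈ DerSet m ∞ ∞,
    ∀ gb, IsMinimalLocality m b gb → Lf b A ≤ ∫ x in A, uscEnvAE m gb x ∂ν

/-- `ν = |Df|`: the least finite measure dominating `L_f`. -/
def IsTotalVariation (m : Measure X) (Lf : MDerivation X m → SignedMeasure X)
    (ν : Measure X) : Prop :=
  IsTVBound m Lf ν ∧ ∀ ν', IsTVBound m Lf ν' → ν ≤ ν'

/-- `ν` is a weak-* limit, in duality with `C_b(X)`, of measures `lip_a(f_n) m` with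
`f_n ∈ Lip_0` converging to `f` in `L^1`. -/
def IsStarLimit (m : Measure X) (f : X → ℝ) (ν : Measure X) : Prop :=
  IsFiniteMeasure ν ∧ ∃ fn : ℕ → X → ℝ, (∀ n, fn n ∈ Lip0 X) ∧
    Tendsto (fun n => eLpNorm (fn n - f) 1 m) atTop (𝓝 0) ∧
    ∀ h : X → ℝ, Continuous h → (∃ M, ∀ x, |h x| ≤ M) →
      Tendsto (fun n => ∫ x, h x * lipA (fn n) x ∂m) atTop (𝓝 (∫ x, h x ∂ν))

/-- `f ∈ BV_*(X,d,m)` (relaxed BV space). -/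
def MemBVStar (m : Measure X) (f : X → ℝ) : Prop :=
  MemLp f 1 m ∧ ∃ ν, IsStarLimit m f ν

/-- `ν = |Df|_*`: the minimal relaxed total variation measure. -/
def IsMinimalStarLimit (m : Measure X) (f : X → ℝ) (ν : Measure X) : Prop :=
  IsStarLimit m f ν ∧ ∀ ν', IsStarLimit m f ν' → ν ≤ ν'

/-- The essential total variation of `f` along the curve `γ`. -/
def essVarAlong (f : X → ℝ) (γ : C(unitInterval, X)) : ℝ≥0∞ :=
  ⨅ (g : ℝ → ℝ) (_ : ∀ᵐ t ∂(volume.restrict (Set.Icc (0:ℝ) 1)), g t = f (extC γ t)),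
    eVariationOn g (Set.Icc (0:ℝ) 1)

/-- `μ` is an admissible weak total variation measure for `f` in the sense of
Ambrosio–Di Marino: along every `∞`-test plan, `f` has finite essential variation on
a.e. curve and the (localized) integrated variation is bounded by
`C(π) ‖Lip γ‖_{L^∞(π)} μ`. -/
def IsWBVMeasure (m : Measure X) (f : X → ℝ) (μ : Measure X) : Prop :=
  IsFiniteMeasure μ ∧
  ∀ (π : Measure C(unitInterval, X)) (spd : C(unitInterval, X) → ℝ → ℝ) (Cpi : ℝ≥0∞),
    IsTestPlan m ∞ π spd Cpi →
    (∀ᵐ γ ∂π, essVarAlong f γ < ∞) ∧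
    ∀ A : Set X, IsOpen A →
      ∫⁻ γ in {γ | ∀ t : unitInterval, γ t ∈ A}, essVarAlong f γ ∂π ≤
        Cpi * eLpNorm
          (fun γ => (eLpNorm (spd γ) ∞ (volume.restrict (Set.Ioo (0:ℝ) 1))).toReal) ∞ π
          * μ A

/-- `f ∈ w-BV(X,d,m)`. -/
def MemWBV (m : Measure X) (f : X → ℝ) : Prop :=
  MemLp f 1 m ∧ ∃ μ, IsWBVMeasure m f μ

/-- `μ = |Df|_w`: the minimal weak total variation measure. -/
def IsMinimalWBVMeasure (m : Measure X) (f : X → ℝ) (μ : Measure X) : Prop :=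
  IsWBVMeasure m f μ ∧ ∀ μ', IsWBVMeasure m f μ' → μ ≤ μ'


section StrongLocalityAux

lemma exists_lipschitzWith_of_bound {f : X → ℝ} {C : ℝ} (hC : 0 ≤ C)
    (h : ∀ x y, |f x - f y| ≤ C * dist x y) : ∃ K, LipschitzWith K f := by
  refine ⟨Real.toNNReal C, LipschitzWith.of_dist_le_mul fun x y => ?_⟩
  rw [Real.dist_eq, Real.coe_toNNReal C hC]
  exact h x y

lemma lip0_zero : (0 : X → ℝ) ∈ Lip0 X := by
  constructor
  · exact ⟨0, LipschitzWith.const 0⟩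
  · have : tsupport (0 : X → ℝ) = ∅ := by
      simp [tsupport]
    rw [this]
    exact Bornology.isBounded_empty

lemma lip0_add {f g : X → ℝ} (hf : f ∈ Lip0 X) (hg : g ∈ Lip0 X) : f + g ∈ Lip0 X := by
  obtain ⟨⟨Kf, hKf⟩, hbf⟩ := hf
  obtain ⟨⟨Kg, hKg⟩, hbg⟩ := hg
  constructor
  · refine exists_lipschitzWith_of_bound (C := (Kf : ℝ) + Kg) (by positivity) fun x y => ?_
    have h1 := hKf.dist_le_mul x y
    have h2 := hKg.dist_le_mul x y
    rw [Real.dist_eq] at h1 h2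
    calc |(f + g) x - (f + g) y| = |(f x - f y) + (g x - g y)| := by
          simp only [Pi.add_apply]; ring_nf
      _ ≤ |f x - f y| + |g x - g y| := abs_add_le _ _
      _ ≤ (Kf : ℝ) * dist x y + (Kg : ℝ) * dist x y := add_le_add h1 h2
      _ = ((Kf : ℝ) + Kg) * dist x y := by ring
  · have h1 : tsupport (f + g) ⊆ tsupport f ∪ tsupport g := by
      refine closure_minimal ?_ (isClosed_closure.union isClosed_closure)
      intro x hx
      by_contra hc
      simp only [mem_union, not_or] at hc
      have hfx : f x = 0 := image_eq_zero_of_notMem_tsupport hc.1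
      have hgx : g x = 0 := image_eq_zero_of_notMem_tsupport hc.2
      have : (f + g) x = 0 := by simp [hfx, hgx]
      exact hx this
    exact (hbf.union hbg).subset h1

lemma lip0_smul (c : ℝ) {f : X → ℝ} (hf : f ∈ Lip0 X) : c • f ∈ Lip0 X := by
  obtain ⟨⟨Kf, hKf⟩, hbf⟩ := hf
  constructor
  · refine exists_lipschitzWith_of_bound (C := |c| * Kf) (by positivity) fun x y => ?_
    have h1 := hKf.dist_le_mul x y
    rw [Real.dist_eq] at h1
    calc |(c • f) x - (c • f) y| = |c| * |f x - f y| := by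
          simp only [Pi.smul_apply, smul_eq_mul, ← abs_mul]; ring_nf
      _ ≤ |c| * ((Kf : ℝ) * dist x y) := by
          exact mul_le_mul_of_nonneg_left h1 (abs_nonneg c)
      _ = |c| * Kf * dist x y := by ring
  · refine hbf.subset (closure_minimal ?_ isClosed_closure)
    intro x hx
    have : f x ≠ 0 := fun h0 => hx (by simp [h0])
    exact subset_closure this

lemma lip0_bounded {f : X → ℝ} (hf : f ∈ Lip0 X) : ∃ M : ℝ, 0 ≤ M ∧ ∀ x, |f x| ≤ M := by
  obtain ⟨⟨K, hK⟩, hb⟩ := hf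
  by_cases hs : tsupport f = ∅
  · refine ⟨0, le_refl 0, fun x => ?_⟩
    have : f x = 0 := image_eq_zero_of_notMem_tsupport (by simp [hs])
    simp [this]
  · obtain ⟨z, hz⟩ := Set.nonempty_iff_ne_empty.mpr hs
    obtain ⟨R, hR⟩ := (Metric.isBounded_iff_subset_closedBall z).mp hb
    refine ⟨|f z| + K * max R 0, by positivity, fun x => ?_⟩
    by_cases hx : x ∈ tsupport f
    · have hd : dist x z ≤ max R 0 := le_trans (hR hx) (le_max_left _ _)
      have h1 : dist (f x) (f z) ≤ K * dist x z := hK.dist_le_mul x z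
      rw [Real.dist_eq] at h1
      have h2 : |f x| ≤ |f z| + |f x - f z| := by
        have := abs_sub_abs_le_abs_sub (f x) (f z)
        linarith [abs_nonneg (f x - f z)]
      have h3 : (K : ℝ) * dist x z ≤ K * max R 0 :=
        mul_le_mul_of_nonneg_left hd (K.coe_nonneg)
      linarith
    · have : f x = 0 := image_eq_zero_of_notMem_tsupport hx
      rw [this, abs_zero]
      positivity

lemma lip0_mul_lip {χ f : X → ℝ} (hχ : χ ∈ Lip0 X) (hf : ∃ K, LipschitzWith K f) :
    χ * f ∈ Lip0 X := by
  obtain ⟨Kf, hKf⟩ := hf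
  obtain ⟨Mχ, hMχ0, hMχ⟩ := lip0_bounded hχ
  obtain ⟨⟨Kχ, hKχ⟩, hbχ⟩ := hχ
  have hsupp : tsupport (χ * f) ⊆ tsupport χ := by
    refine closure_minimal ?_ isClosed_closure
    intro x hx
    have : χ x ≠ 0 := by
      intro h0
      exact hx (by simp [Pi.mul_apply, h0])
    exact subset_closure this
  refine ⟨?_, hbχ.subset hsupp⟩
  by_cases hs : tsupport χ = ∅
  · have hze : χ * f = 0 := by
      funext x
      have : χ x = 0 := image_eq_zero_of_notMem_tsupport (by simp [hs])
      simp [Pi.mul_apply, this]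
    rw [hze]
    exact ⟨0, LipschitzWith.const 0⟩
  · obtain ⟨z, hz⟩ := Set.nonempty_iff_ne_empty.mpr hs
    obtain ⟨R, hR⟩ := (Metric.isBounded_iff_subset_closedBall z).mp hbχ
    set R' := max R 0 with hR'
    have hR'0 : 0 ≤ R' := le_max_right _ _
    set Mf := |f z| + Kf * R' with hMf
    have hMf0 : 0 ≤ Mf := by positivity
    have hfb : ∀ y ∈ tsupport χ, |f y| ≤ Mf := by
      intro y hy
      have hd : dist y z ≤ R' := le_trans (hR hy) (le_max_left _ _)
      have h1 : dist (f y) (f z) ≤ Kf * dist y z := hKf.dist_le_mul y z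
      rw [Real.dist_eq] at h1
      have h2 : |f y| ≤ |f z| + |f y - f z| := by
        have := abs_sub_abs_le_abs_sub (f y) (f z)
        linarith [abs_nonneg (f y - f z)]
      have h3 : (Kf : ℝ) * dist y z ≤ Kf * R' := mul_le_mul_of_nonneg_left hd Kf.coe_nonneg
      rw [hMf]; linarith
    set C := Mχ * Kf + Mf * Kχ with hC
    have hC0 : 0 ≤ C := by positivity
    refine exists_lipschitzWith_of_bound hC0 fun x y => ?_
    have key : ∀ a b : X, b ∈ tsupport χ → |χ a * f a - χ b * f b| ≤ C * dist a b := by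
      intro a b hbs
      have h1 : dist (f a) (f b) ≤ Kf * dist a b := hKf.dist_le_mul a b
      have h2 : dist (χ a) (χ b) ≤ Kχ * dist a b := hKχ.dist_le_mul a b
      rw [Real.dist_eq] at h1 h2
      have hfy : |f b| ≤ Mf := hfb b hbs
      calc |χ a * f a - χ b * f b| = |χ a * (f a - f b) + f b * (χ a - χ b)| := by ring_nf
        _ ≤ |χ a * (f a - f b)| + |f b * (χ a - χ b)| := abs_add_le _ _
        _ = |χ a| * |f a - f b| + |f b| * |χ a - χ b| := by rw [abs_mul, abs_mul]
        _ ≤ Mχ * ((Kf : ℝ) * dist a b) + Mf * ((Kχ : ℝ) * dist a b) := by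
            refine add_le_add ?_ ?_
            · exact mul_le_mul (hMχ a) h1 (abs_nonneg _) hMχ0
            · exact mul_le_mul hfy h2 (abs_nonneg _) hMf0
        _ = C * dist a b := by rw [hC]; ring
    simp only [Pi.mul_apply]
    by_cases hy : y ∈ tsupport χ
    · exact key x y hy
    · by_cases hx : x ∈ tsupport χ
      · rw [abs_sub_comm, dist_comm]
        exact key y x hx
      · have hχx : χ x = 0 := image_eq_zero_of_notMem_tsupport hx
        have hχy : χ y = 0 := image_eq_zero_of_notMem_tsupport hy
        rw [hχx, hχy]
        simp only [zero_mul, sub_zero, abs_zero]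
        positivity

lemma lip0_mul {f g : X → ℝ} (hf : f ∈ Lip0 X) (hg : g ∈ Lip0 X) : f * g ∈ Lip0 X :=
  lip0_mul_lip hf hg.1

lemma lip0_pow {u : X → ℝ} (hu : u ∈ Lip0 X) : ∀ k : ℕ, (fun x => (u x) ^ (k + 1)) ∈ Lip0 X := by
  intro k
  induction k with
  | zero => simpa [pow_one] using hu
  | succ k ih =>
      have hfun : (fun x => (u x) ^ (k + 2)) = (fun x => (u x) ^ (k + 1)) * u := by
        funext x
        simp [Pi.mul_apply, pow_succ]
      rw [hfun]
      exact lip0_mul_lip ih hu.1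

lemma cutoff_exists (z : X) {r R : ℝ} (hrR : r < R) :
    ∃ χ : X → ℝ, χ ∈ Lip0 X ∧ (∀ x, 0 ≤ χ x ∧ χ x ≤ 1) ∧
      (∀ x, dist x z ≤ r → χ x = 1) ∧ tsupport χ ⊆ Metric.closedBall z R := by
  have hden : 0 < R - r := by linarith
  set χ : X → ℝ := fun x => max 0 (min 1 ((R - dist x z) / (R - r))) with hχdef
  have hsupp : tsupport χ ⊆ Metric.closedBall z R := by
    refine closure_minimal ?_ Metric.isClosed_closedBall
    intro x hx
    rw [Function.mem_support] at hx
    rw [Metric.mem_closedBall]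
    by_contra hcon
    push_neg at hcon
    have h1 : (R - dist x z) / (R - r) ≤ 0 := by
      apply div_nonpos_of_nonpos_of_nonneg <;> linarith
    have : χ x = 0 := by
      rw [hχdef]
      simp only
      rw [max_eq_left]
      exact le_trans (min_le_right _ _) h1
    exact hx this
  refine ⟨χ, ⟨?_, Metric.isBounded_closedBall.subset hsupp⟩, ?_, ?_, hsupp⟩
  · refine exists_lipschitzWith_of_bound (C := (R - r)⁻¹) (by positivity) fun x y => ?_
    have habs : ∀ a b : ℝ, |max 0 (min 1 a) - max 0 (min 1 b)| ≤ |a - b| := by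
      intro a b
      have h1 : |max 0 (min 1 a) - max 0 (min 1 b)| ≤ |min 1 a - min 1 b| := by
        rw [max_comm 0 (min 1 a), max_comm 0 (min 1 b)]
        exact abs_max_sub_max_le_abs _ _ _
      have h2 : |min 1 a - min 1 b| ≤ |a - b| := by
        refine (abs_min_sub_min_le_max 1 a 1 b).trans ?_
        simp
      exact h1.trans h2
    calc |χ x - χ y| ≤ |(R - dist x z) / (R - r) - (R - dist y z) / (R - r)| := habs _ _
      _ = |dist y z - dist x z| / (R - r) := by
          rw [div_sub_div_same, abs_div, abs_of_pos hden]
          ring_nf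
      _ ≤ dist x y / (R - r) := by
          have h3 : |dist y z - dist x z| ≤ dist x y := by
            rw [abs_sub_comm]
            exact abs_dist_sub_le x y z
          exact (div_le_div_iff_of_pos_right hden).mpr h3
      _ = (R - r)⁻¹ * dist x y := by rw [div_eq_inv_mul]
  · intro x
    constructor
    · exact le_max_left _ _
    · exact max_le (by norm_num) (min_le_left _ _)
  · intro x hx
    have h1 : (1 : ℝ) ≤ (R - dist x z) / (R - r) := by
      rw [le_div_iff₀ hden]
      linarith
    rw [hχdef]
    simp only
    rw [min_eq_left h1, max_eq_right (by norm_num)]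


variable {m : Measure X} (b : MDerivation X m)

lemma b_zero : b.toFun 0 =ᵐ[m] 0 := by
  have h := b.map_smul' 0 0 lip0_zero
  have h0 : (0 : ℝ) • (0 : X → ℝ) = 0 := zero_smul ℝ (0 : X → ℝ)
  rw [h0] at h
  refine h.trans ?_
  filter_upwards with x
  simp

lemma b_pow {u : X → ℝ} (hu : u ∈ Lip0 X) :
    ∀ k : ℕ, b.toFun (fun x => (u x) ^ (k + 1)) =ᵐ[m]
      fun x => ((k : ℝ) + 1) * (u x) ^ k * b.toFun u x := by
  intro k
  induction k with
  | zero =>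
      have hfun : (fun x => (u x) ^ (0 + 1)) = u := by
        funext x; simp
      rw [hfun]
      filter_upwards with x
      simp
  | succ k ih =>
      have hfun : (fun x => (u x) ^ (k + 1 + 1)) = (fun x => (u x) ^ (k + 1)) * u := by
        funext x
        simp [Pi.mul_apply, pow_succ]
      rw [hfun]
      have hlei := b.leibniz' _ (lip0_pow hu k) u hu
      refine hlei.trans ?_
      filter_upwards [ih] with x hx
      simp only [Pi.add_apply, Pi.mul_apply, hx]
      push_cast
      ring

lemma b_poly {u : X → ℝ} (hu : u ∈ Lip0 X) (P : Polynomial ℝ) :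
    (fun x => P.eval (u x) - P.eval 0) ∈ Lip0 X ∧
      b.toFun (fun x => P.eval (u x) - P.eval 0) =ᵐ[m]
        fun x => (Polynomial.derivative P).eval (u x) * b.toFun u x := by
  induction P using Polynomial.induction_on' with
  | add p q hp hq =>
      have hfun : (fun x => (p + q).eval (u x) - (p + q).eval 0)
          = (fun x => p.eval (u x) - p.eval 0) + (fun x => q.eval (u x) - q.eval 0) := by
        funext x
        simp only [Polynomial.eval_add, Pi.add_apply]
        ring
      rw [hfun]
      refine ⟨lip0_add hp.1 hq.1, ?_⟩
      have h1 := b.map_add' _ hp.1 _ hq.1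
      refine h1.trans ?_
      filter_upwards [hp.2, hq.2] with x h2 h3
      simp only [Pi.add_apply, h2, h3, map_add, Polynomial.eval_add]
      ring
  | monomial n a =>
      cases n with
      | zero =>
          have hfun : (fun x => (Polynomial.monomial 0 a).eval (u x)
              - (Polynomial.monomial 0 a).eval 0) = (0 : X → ℝ) := by
            funext x
            simp
          rw [hfun]
          refine ⟨lip0_zero, (b_zero b).trans ?_⟩
          filter_upwards with x
          simp
      | succ k =>
          have hfun : (fun x => (Polynomial.monomial (k + 1) a).eval (u x)
              - (Polynomial.monomial (k + 1) a).eval 0) = a • (fun x => (u x) ^ (k + 1)) := by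
            funext x
            simp [Polynomial.eval_monomial]
          rw [hfun]
          refine ⟨lip0_smul a (lip0_pow hu k), ?_⟩
          have h1 := b.map_smul' a _ (lip0_pow hu k)
          refine h1.trans ?_
          filter_upwards [b_pow b hu k] with x hx
          simp only [Pi.smul_apply, smul_eq_mul, hx, Polynomial.derivative_monomial,
            Polynomial.eval_monomial]
          push_cast
          ring

lemma b_sub {F G : X → ℝ} (hF : F ∈ Lip0 X) (hG : G ∈ Lip0 X) :
    b.toFun (F - G) =ᵐ[m] fun x => b.toFun F x - b.toFun G x := by
  have hfun : F - G = F + (-1 : ℝ) • G := by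
    funext x
    simp [Pi.sub_apply, Pi.add_apply, Pi.smul_apply]
    ring
  rw [hfun]
  have h1 := b.map_add' F hF _ (lip0_smul (-1) hG)
  refine h1.trans ?_
  have h2 := b.map_smul' (-1) G hG
  filter_upwards [h2] with x hx
  simp only [Pi.add_apply, hx, Pi.smul_apply, smul_eq_mul]
  ring

lemma ae_zero_of_forall_lip0_integral [BorelSpace X] {m : Measure X}
    {F : X → ℝ} (hF : Integrable F m)
    (htest : ∀ χ ∈ Lip0 X, ∫ x, F x * χ x ∂m = 0) : F =ᵐ[m] 0 := by
  rcases isEmpty_or_nonempty X with hX | hX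
  · exact ae_of_all _ fun x => isEmptyElim x
  obtain ⟨z⟩ := hX
  -- cutoffs
  have hcut : ∀ n : ℕ, ∃ χ : X → ℝ, χ ∈ Lip0 X ∧ (∀ x, 0 ≤ χ x ∧ χ x ≤ 1) ∧
      (∀ x, dist x z ≤ (n : ℝ) → χ x = 1) ∧ tsupport χ ⊆ Metric.closedBall z (n + 1) :=
    fun n => cutoff_exists z (by exact_mod_cast lt_add_one (n : ℝ))
  choose cut hcut1 hcut2 hcut3 hcut4 using hcut
  have hcutcont : ∀ n, Continuous (cut n) := fun n => (hcut1 n).1.choose_spec.continuous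
  -- Step A : integral over closed sets vanishes
  have hclosed : ∀ C : Set X, IsClosed C → ∫ x in C, F x ∂m = 0 := by
    intro C hC
    rcases eq_empty_or_nonempty C with rfl | hCne
    · simp
    set θ : ℕ → X → ℝ := fun k x => max 0 (1 - ((k : ℝ) + 1) * Metric.infDist x C) with hθ
    have hθlip : ∀ k, ∃ K, LipschitzWith K (θ k) := by
      intro k
      refine exists_lipschitzWith_of_bound (C := (k : ℝ) + 1) (by positivity) fun x y => ?_
      have h1 : |(1 - ((k : ℝ) + 1) * Metric.infDist x C)
          - (1 - ((k : ℝ) + 1) * Metric.infDist y C)|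
          ≤ ((k : ℝ) + 1) * dist x y := by
        have h2 : |Metric.infDist x C - Metric.infDist y C| ≤ dist x y := by
          have := (Metric.lipschitz_infDist_pt C).dist_le_mul x y
          rw [Real.dist_eq] at this
          simpa using this
        have he : (1 - ((k : ℝ) + 1) * Metric.infDist x C)
            - (1 - ((k : ℝ) + 1) * Metric.infDist y C)
            = ((k : ℝ) + 1) * (Metric.infDist y C - Metric.infDist x C) := by ring
        rw [he, abs_mul, abs_of_nonneg (show (0:ℝ) ≤ (k : ℝ) + 1 by positivity), abs_sub_comm]
        exact mul_le_mul_of_nonneg_left h2 (by positivity)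
      calc |θ k x - θ k y| ≤ |(1 - ((k : ℝ) + 1) * Metric.infDist x C)
            - (1 - ((k : ℝ) + 1) * Metric.infDist y C)| := by
            rw [hθ]
            simp only
            rw [max_comm 0 _, max_comm 0 _]
            exact abs_max_sub_max_le_abs _ _ _
        _ ≤ ((k : ℝ) + 1) * dist x y := h1
    have hθcont : ∀ k, Continuous (θ k) := fun k => ((hθlip k).choose_spec).continuous
    have hθ01 : ∀ k x, 0 ≤ θ k x ∧ θ k x ≤ 1 := by
      intro k x
      constructor
      · exact le_max_left _ _
      · apply max_le (by norm_num)
        have : 0 ≤ ((k : ℝ) + 1) * Metric.infDist x C :=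
          mul_nonneg (by positivity) Metric.infDist_nonneg
        linarith
    -- Step A1 : for fixed n, ∫ over C of F * cut n = 0
    have hA1 : ∀ n : ℕ, ∫ x in C, F x * cut n x ∂m = 0 := by
      intro n
      have hk : ∀ k : ℕ, ∫ x, F x * (cut n x * θ k x) ∂m = 0 := by
        intro k
        have hmem : cut n * θ k ∈ Lip0 X := lip0_mul_lip (hcut1 n) (hθlip k)
        have := htest _ hmem
        simpa [Pi.mul_apply] using this
      have hDCT : Tendsto (fun k => ∫ x, F x * (cut n x * θ k x) ∂m) atTop
          (𝓝 (∫ x, C.indicator (fun y => F y * cut n y) x ∂m)) := by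
        refine tendsto_integral_of_dominated_convergence (fun x => |F x|)
          (fun k => ?_) hF.abs (fun k => ?_) ?_
        · exact hF.aestronglyMeasurable.mul
            ((hcutcont n).mul (hθcont k)).aestronglyMeasurable
        · filter_upwards with x
          rw [Real.norm_eq_abs, abs_mul, abs_mul]
          have h1 := (hcut2 n x)
          have h2 := hθ01 k x
          have : |cut n x| * |θ k x| ≤ 1 := by
            rw [abs_of_nonneg h1.1, abs_of_nonneg h2.1]
            exact mul_le_one₀ h1.2 h2.1 h2.2
          nlinarith [abs_nonneg (F x)]
        · filter_upwards with x
          by_cases hx : x ∈ C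
          · have hval : ∀ k : ℕ, θ k x = 1 := by
              intro k
              rw [hθ]
              simp only
              rw [Metric.infDist_zero_of_mem hx]
              norm_num
            rw [Set.indicator_of_mem hx]
            refine Tendsto.congr (fun k => ?_) tendsto_const_nhds
            rw [hval k, mul_one]
          · have hpos : 0 < Metric.infDist x C := (hC.notMem_iff_infDist_pos hCne).mp hx
            rw [Set.indicator_of_notMem hx]
            obtain ⟨k₀, hk₀⟩ := exists_nat_gt (Metric.infDist x C)⁻¹
            have hev : ∀ k ≥ k₀, F x * (cut n x * θ k x) = 0 := by
              intro k hkk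
              have h1 : (1 : ℝ) ≤ ((k : ℝ) + 1) * Metric.infDist x C := by
                have hk' : (Metric.infDist x C)⁻¹ ≤ (k : ℝ) + 1 := by
                  have : (k₀ : ℝ) ≤ (k : ℝ) := by exact_mod_cast hkk
                  linarith
                calc (1:ℝ) = (Metric.infDist x C)⁻¹ * Metric.infDist x C :=
                      (inv_mul_cancel₀ hpos.ne').symm
                  _ ≤ ((k : ℝ) + 1) * Metric.infDist x C :=
                      mul_le_mul_of_nonneg_right hk' hpos.le
              have : θ k x = 0 := by
                rw [hθ]
                simp only
                rw [max_eq_left]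
                linarith
              rw [this]
              ring
            refine Tendsto.congr' ?_ tendsto_const_nhds
            filter_upwards [eventually_ge_atTop k₀] with k hkk
            exact (hev k hkk).symm
      have h0 : Tendsto (fun _ : ℕ => (0 : ℝ)) atTop
          (𝓝 (∫ x, C.indicator (fun y => F y * cut n y) x ∂m)) := by
        refine hDCT.congr fun k => hk k
      have := tendsto_nhds_unique h0 tendsto_const_nhds
      rw [integral_indicator hC.measurableSet] at this
      exact this
    -- Step A2 : n → ∞
    have hDCT2 : Tendsto (fun n => ∫ x in C, F x * cut n x ∂m) atTop
        (𝓝 (∫ x in C, F x ∂m)) := by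
      refine tendsto_integral_of_dominated_convergence (fun x => |F x|)
        (fun n => ?_) hF.abs.restrict (fun n => ?_) ?_
      · exact hF.aestronglyMeasurable.restrict.mul (hcutcont n).aestronglyMeasurable.restrict
      · filter_upwards with x
        rw [Real.norm_eq_abs, abs_mul]
        have h1 := hcut2 n x
        have : |cut n x| ≤ 1 := by rw [abs_of_nonneg h1.1]; exact h1.2
        nlinarith [abs_nonneg (F x)]
      · filter_upwards with x
        obtain ⟨n₀, hn₀⟩ := exists_nat_gt (dist x z)
        refine Tendsto.congr' ?_ tendsto_const_nhds
        filter_upwards [eventually_ge_atTop n₀] with n hn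
        have : cut n x = 1 := by
          apply hcut3
          have : (n₀ : ℝ) ≤ (n : ℝ) := by exact_mod_cast hn
          linarith
        rw [this, mul_one]
    exact tendsto_nhds_unique (hDCT2.congr fun n => hA1 n) tendsto_const_nhds
  -- Step B : conclude F = 0 a.e. via measure extension
  set F' : X → ℝ := hF.aestronglyMeasurable.mk F with hF'def
  have hF'sm : StronglyMeasurable F' := hF.aestronglyMeasurable.stronglyMeasurable_mk
  have hFF' : F =ᵐ[m] F' := hF.aestronglyMeasurable.ae_eq_mk
  have hF'int : Integrable F' m := hF.congr hFF'
  have hclosed' : ∀ C : Set X, IsClosed C → ∫ x in C, F' x ∂m = 0 := by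
    intro C hC
    have h := setIntegral_congr_ae hC.measurableSet (hFF'.mono fun x hx _ => hx)
    rw [← h]
    exact hclosed C hC
  set ν₁ : Measure X := m.withDensity (fun x => ENNReal.ofReal (F' x)) with hν₁
  set ν₂ : Measure X := m.withDensity (fun x => ENNReal.ofReal (- F' x)) with hν₂
  have hmeas₁ : Measurable fun x => ENNReal.ofReal (F' x) :=
    ENNReal.measurable_ofReal.comp hF'sm.measurable
  have hmeas₂ : Measurable fun x => ENNReal.ofReal (- F' x) :=
    ENNReal.measurable_ofReal.comp hF'sm.measurable.neg
  have hfin : ∀ s : Set X, MeasurableSet s →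
      ν₁ s ≠ ∞ ∧ ν₂ s ≠ ∞ := by
    intro s hs
    have h1 : ∫⁻ x in s, ENNReal.ofReal (F' x) ∂m ≤ ∫⁻ x, ‖F' x‖₊ ∂m := by
      refine le_trans (setLIntegral_le_lintegral _ _) (lintegral_mono fun x => ?_)
      rw [← enorm_eq_nnnorm, Real.enorm_eq_ofReal_abs]
      exact ENNReal.ofReal_le_ofReal (le_abs_self _)
    have h2 : ∫⁻ x in s, ENNReal.ofReal (- F' x) ∂m ≤ ∫⁻ x, ‖F' x‖₊ ∂m := by
      refine le_trans (setLIntegral_le_lintegral _ _) (lintegral_mono fun x => ?_)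
      rw [← enorm_eq_nnnorm, Real.enorm_eq_ofReal_abs]
      exact ENNReal.ofReal_le_ofReal (neg_le_abs _)
    have hfin' : ∫⁻ x, ‖F' x‖₊ ∂m < ∞ := hF'int.2
    rw [hν₁, hν₂, withDensity_apply _ hs, withDensity_apply _ hs]
    exact ⟨(h1.trans_lt hfin').ne, (h2.trans_lt hfin').ne⟩
  have hsetint : ∀ s : Set X, MeasurableSet s →
      ∫ x in s, F' x ∂m = (ν₁ s).toReal - (ν₂ s).toReal := by
    intro s hs
    have := integral_eq_lintegral_pos_part_sub_lintegral_neg_part (hF'int.restrict (s := s))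
    rw [this, hν₁, hν₂, withDensity_apply _ hs, withDensity_apply _ hs]
  have hνeq : ν₁ = ν₂ := by
    haveI : IsFiniteMeasure ν₁ :=
      ⟨lt_top_iff_ne_top.mpr (hfin univ MeasurableSet.univ).1⟩
    refine ext_of_generate_finite {s : Set X | IsClosed s}
      (BorelSpace.measurable_eq.trans borel_eq_generateFrom_isClosed) isPiSystem_isClosed
      (fun s hs => ?_) ?_
    · have h1 := hsetint s hs.measurableSet
      rw [hclosed' s hs] at h1
      have h2 : (ν₁ s).toReal = (ν₂ s).toReal := by linarith
      exact (ENNReal.toReal_eq_toReal_iff' (hfin s hs.measurableSet).1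
        (hfin s hs.measurableSet).2).mp h2
    · have h1 := hsetint univ MeasurableSet.univ
      rw [hclosed' univ isClosed_univ] at h1
      have h2 : (ν₁ univ).toReal = (ν₂ univ).toReal := by linarith
      exact (ENNReal.toReal_eq_toReal_iff' (hfin univ MeasurableSet.univ).1
        (hfin univ MeasurableSet.univ).2).mp h2
  have hzero : ∀ s : Set X, MeasurableSet s → m s < ∞ → ∫ x in s, F' x ∂m = 0 := by
    intro s hs _
    rw [hsetint s hs, hνeq]
    ring
  have hF'0 : F' =ᵐ[m] 0 :=
    hF'int.aefinStronglyMeasurable.ae_eq_zero_of_forall_setIntegral_eq_zero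
      (fun s hs _ => hF'int.integrableOn) hzero
  exact hFF'.trans hF'0

section RealPoly

def Pc (c : ℝ) (n : ℕ) : Polynomial ℝ :=
  Polynomial.X - Polynomial.X * (1 - Polynomial.C c⁻¹ * Polynomial.X ^ 2) ^ (n + 1)

def Dc (c : ℝ) (n : ℕ) (t : ℝ) : ℝ :=
  1 - (1 - c⁻¹ * t ^ 2) ^ (n + 1) + 2 * ((n : ℝ) + 1) * (c⁻¹ * t ^ 2) * (1 - c⁻¹ * t ^ 2) ^ n

lemma Pc_eval (c : ℝ) (n : ℕ) (t : ℝ) :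
    (Pc c n).eval t = t - t * (1 - c⁻¹ * t ^ 2) ^ (n + 1) := by
  simp [Pc]

lemma Pc_eval_zero (c : ℝ) (n : ℕ) : (Pc c n).eval 0 = 0 := by
  simp [Pc_eval]

lemma Dc_zero (c : ℝ) (n : ℕ) : Dc c n 0 = 0 := by
  simp [Dc]

lemma Pc_deriv (c : ℝ) (n : ℕ) (t : ℝ) :
    (Polynomial.derivative (Pc c n)).eval t = Dc c n t := by
  have h2 : HasDerivAt (fun s : ℝ => s - s * (1 - c⁻¹ * s ^ 2) ^ (n + 1)) (Dc c n t) t := by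
    have hinner : HasDerivAt (fun s : ℝ => 1 - c⁻¹ * s ^ 2) (-(c⁻¹ * (2 * t))) t := by
      have h := ((hasDerivAt_pow 2 t).const_mul c⁻¹).const_sub 1
      refine h.congr_deriv ?_
      push_cast
      ring
    have hpow := hinner.pow (n + 1)
    have hmul := (hasDerivAt_id' (x := t)).mul hpow
    have hsub := (hasDerivAt_id' (x := t)).sub hmul
    refine hsub.congr_deriv ?_
    simp only [Dc, Nat.add_sub_cancel, Pi.pow_apply]
    push_cast
    ring
  have h1 := (Pc c n).hasDerivAt t
  have heq : (fun s : ℝ => (Pc c n).eval s) = fun s => s - s * (1 - c⁻¹ * s ^ 2) ^ (n + 1) :=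
    funext fun s => Pc_eval c n s
  rw [heq] at h1
  exact h1.unique h2

lemma geom_aux {a : ℝ} (h0 : 0 ≤ a) (h1 : a ≤ 1) (n : ℕ) :
    ((n : ℝ) + 1) * (1 - a) * a ^ n ≤ 1 := by
  have hgeo : (∑ i ∈ Finset.range (n + 1), a ^ i) * (a - 1) = a ^ (n + 1) - 1 :=
    geom_sum_mul a (n + 1)
  have hsum_ge : ((n : ℝ) + 1) * a ^ n ≤ ∑ i ∈ Finset.range (n + 1), a ^ i := by
    have h := Finset.card_nsmul_le_sum (Finset.range (n + 1)) (fun i => a ^ i) (a ^ n)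
      (fun i hi => pow_le_pow_of_le_one h0 h1 (by
        simp only [Finset.mem_range] at hi; omega))
    simpa [nsmul_eq_mul] using h
  have heq : (1 - a) * (∑ i ∈ Finset.range (n + 1), a ^ i) = 1 - a ^ (n + 1) := by
    linear_combination -hgeo
  have hkey := mul_le_mul_of_nonneg_left hsum_ge (sub_nonneg.mpr h1)
  have hpow0 : 0 ≤ a ^ (n + 1) := pow_nonneg h0 _
  have hre : ((n : ℝ) + 1) * (1 - a) * a ^ n = (1 - a) * (((n : ℝ) + 1) * a ^ n) := by ring
  linarith [hkey, heq, hpow0, hre.le, hre.ge]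

section Mbounds

variable {M t : ℝ}

lemma a_mem (hM : 0 ≤ M) (ht : |t| ≤ M) :
    0 ≤ 1 - ((M + 1) ^ 2)⁻¹ * t ^ 2 ∧ ((M + 1) ^ 2)⁻¹ * t ^ 2 ≤ 1 := by
  have hc : (0 : ℝ) < (M + 1) ^ 2 := by positivity
  have ht2 : t ^ 2 ≤ (M + 1) ^ 2 := by
    have h1 : t ^ 2 = |t| ^ 2 := (sq_abs t).symm
    nlinarith [abs_nonneg t]
  have h2 : ((M + 1) ^ 2)⁻¹ * t ^ 2 ≤ 1 := by
    rw [inv_mul_le_iff₀ hc]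
    linarith
  exact ⟨by linarith, h2⟩

lemma Dc_bound (hM : 0 ≤ M) (ht : |t| ≤ M) (n : ℕ) :
    |Dc ((M + 1) ^ 2) n t| ≤ 3 := by
  obtain ⟨ha0, he1⟩ := a_mem hM ht
  set e := ((M + 1) ^ 2)⁻¹ * t ^ 2 with he
  have he0 : 0 ≤ e := by positivity
  set a := 1 - e with ha
  have ha1 : a ≤ 1 := by rw [ha]; linarith
  have hp1 : 0 ≤ a ^ (n + 1) := pow_nonneg ha0 _
  have hp2 : a ^ (n + 1) ≤ 1 := pow_le_one₀ ha0 ha1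
  have hg : ((n : ℝ) + 1) * (1 - a) * a ^ n ≤ 1 := geom_aux ha0 ha1 n
  have hgn : 0 ≤ ((n : ℝ) + 1) * (1 - a) * a ^ n := by
    have h1a : (0:ℝ) ≤ 1 - a := by linarith
    have hpn : 0 ≤ a ^ n := pow_nonneg ha0 _
    have hn1 : (0:ℝ) ≤ (n : ℝ) + 1 := by positivity
    exact mul_nonneg (mul_nonneg hn1 h1a) hpn
  have hDe : Dc ((M + 1) ^ 2) n t
      = 1 - a ^ (n + 1) + 2 * (((n : ℝ) + 1) * (1 - a) * a ^ n) := by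
    rw [Dc, ha]
    ring
  rw [hDe]
  rw [abs_le]
  constructor <;> linarith

lemma Pc_eval_bound (hM : 0 ≤ M) (ht : |t| ≤ M) (n : ℕ) :
    |(Pc ((M + 1) ^ 2) n).eval t| ≤ M := by
  obtain ⟨ha0, he1⟩ := a_mem hM ht
  set a := 1 - ((M + 1) ^ 2)⁻¹ * t ^ 2 with ha
  have ha1 : a ≤ 1 := by rw [ha]; have : 0 ≤ ((M + 1) ^ 2)⁻¹ * t ^ 2 := by positivity
                         linarith
  have hp1 : 0 ≤ a ^ (n + 1) := pow_nonneg ha0 _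
  have hp2 : a ^ (n + 1) ≤ 1 := pow_le_one₀ ha0 ha1
  rw [Pc_eval]
  have heq : t - t * a ^ (n + 1) = t * (1 - a ^ (n + 1)) := by ring
  rw [← ha, heq, abs_mul]
  calc |t| * |1 - a ^ (n + 1)| ≤ |t| * 1 := by
        apply mul_le_mul_of_nonneg_left ?_ (abs_nonneg t)
        rw [abs_of_nonneg (by linarith)]
        linarith
    _ ≤ M := by rw [mul_one]; exact ht

lemma Dc_tendsto (hM : 0 ≤ M) (ht : |t| ≤ M) (ht0 : t ≠ 0) :
    Tendsto (fun n => Dc ((M + 1) ^ 2) n t) atTop (𝓝 1) := by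
  obtain ⟨ha0, he1⟩ := a_mem hM ht
  set a := 1 - ((M + 1) ^ 2)⁻¹ * t ^ 2 with ha
  have ha1 : a < 1 := by
    rw [ha]
    have : 0 < ((M + 1) ^ 2)⁻¹ * t ^ 2 := by positivity
    linarith
  have hpow : Tendsto (fun n : ℕ => a ^ n) atTop (𝓝 0) :=
    tendsto_pow_atTop_nhds_zero_of_lt_one ha0 ha1
  have hnpow : Tendsto (fun n : ℕ => (n : ℝ) * a ^ n) atTop (𝓝 0) := by
    have hs := summable_pow_mul_geometric_of_norm_lt_one 1 (r := a)
      (by rw [Real.norm_eq_abs, abs_of_nonneg ha0]; exact ha1)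
    have := hs.tendsto_atTop_zero
    refine this.congr fun n => by simp [pow_one]
  have hfinal : Tendsto
      (fun n : ℕ => 1 - a * a ^ n + (2 * (1 - a) * ((n : ℝ) * a ^ n) + 2 * (1 - a) * a ^ n))
      atTop (𝓝 (1 - a * 0 + (2 * (1 - a) * 0 + 2 * (1 - a) * 0))) := by
    exact ((hpow.const_mul a).const_sub 1).add
      ((hnpow.const_mul (2 * (1 - a))).add (hpow.const_mul (2 * (1 - a))))
  have hval : (1 - a * 0 + (2 * (1 - a) * 0 + 2 * (1 - a) * 0)) = (1 : ℝ) := by ring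
  rw [hval] at hfinal
  refine hfinal.congr fun n => ?_
  rw [Dc, ← ha]
  have hea : ((M + 1) ^ 2)⁻¹ * t ^ 2 = 1 - a := by rw [ha]; ring
  rw [hea]
  ring

lemma Pc_eval_tendsto (hM : 0 ≤ M) (ht : |t| ≤ M) :
    Tendsto (fun n => (Pc ((M + 1) ^ 2) n).eval t) atTop (𝓝 t) := by
  by_cases ht0 : t = 0
  · subst ht0
    refine Tendsto.congr (fun n => (Pc_eval_zero _ n).symm) tendsto_const_nhds
  obtain ⟨ha0, he1⟩ := a_mem hM ht
  set a := 1 - ((M + 1) ^ 2)⁻¹ * t ^ 2 with ha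
  have ha1 : a < 1 := by
    rw [ha]
    have : 0 < ((M + 1) ^ 2)⁻¹ * t ^ 2 := by positivity
    linarith
  have hpow : Tendsto (fun n : ℕ => a ^ n) atTop (𝓝 0) :=
    tendsto_pow_atTop_nhds_zero_of_lt_one ha0 ha1
  have hfinal : Tendsto (fun n : ℕ => t - t * a * a ^ n) atTop (𝓝 (t - t * a * 0)) :=
    (hpow.const_mul (t * a)).const_sub t
  have hval : t - t * a * 0 = t := by ring
  rw [hval] at hfinal
  refine hfinal.congr fun n => ?_
  rw [Pc_eval, ← ha]
  ring

end Mbounds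

end RealPoly

lemma core_locality [BorelSpace X] {m : Measure X}
    (b : MDerivation X m) (hb : b ∈ DDiv m) {u : X → ℝ} (hu : u ∈ Lip0 X) :
    ∀ᵐ x ∂m, u x = 0 → b.toFun u x = 0 := by
  obtain ⟨-, h, hhloc, hhdiv⟩ := hb
  obtain ⟨M, hM0, hM⟩ := lip0_bounded hu
  have hucont : Continuous u := hu.1.choose_spec.continuous
  have hbu_int : Integrable (b.toFun u) m := (hhdiv.2 u hu).1
  set S := {x | u x = 0} with hS
  have hSmeas : MeasurableSet S := by
    have hseq : S = u ⁻¹' {0} := by ext x; simp [hS]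
    rw [hseq]
    exact hucont.measurable (measurableSet_singleton 0)
  have key : Set.indicator S (b.toFun u) =ᵐ[m] 0 := by
    refine ae_zero_of_forall_lip0_integral (hbu_int.indicator hSmeas) ?_
    intro χ hχ
    obtain ⟨Mχ, hMχ0, hMχ⟩ := lip0_bounded hχ
    have hχcont : Continuous χ := hχ.1.choose_spec.continuous
    have hbχ_int : Integrable (b.toFun χ) m := (hhdiv.2 χ hχ).1
    have hχbu_int : Integrable (fun x => χ x * b.toFun u x) m :=
      Integrable.bdd_mul hbu_int hχcont.aestronglyMeasurable
        (ae_of_all _ fun x => by rw [Real.norm_eq_abs]; exact hMχ x)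
    -- the integration-by-parts identity
    have Id : ∀ v ∈ Lip0 X, ∫ x, χ x * b.toFun v x ∂m
        = - ∫ x, h x * (v x * χ x) ∂m - ∫ x, v x * b.toFun χ x ∂m := by
      intro v hv
      obtain ⟨Mv, hMv0, hMv⟩ := lip0_bounded hv
      have hvcont : Continuous v := hv.1.choose_spec.continuous
      have hvχ : v * χ ∈ Lip0 X := lip0_mul hv hχ
      have hInt1 : Integrable (fun x => χ x * b.toFun v x) m :=
        Integrable.bdd_mul (hhdiv.2 v hv).1 hχcont.aestronglyMeasurable
          (ae_of_all _ fun x => by rw [Real.norm_eq_abs]; exact hMχ x)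
      have hInt2 : Integrable (fun x => v x * b.toFun χ x) m :=
        Integrable.bdd_mul hbχ_int hvcont.aestronglyMeasurable
          (ae_of_all _ fun x => by rw [Real.norm_eq_abs]; exact hMv x)
      have hlei := b.leibniz' v hv χ hχ
      have hdivId := (hhdiv.2 (v * χ) hvχ).2.2
      have hIeq : ∫ x, b.toFun (v * χ) x ∂m
          = ∫ x, χ x * b.toFun v x ∂m + ∫ x, v x * b.toFun χ x ∂m := by
        rw [← integral_add hInt1 hInt2]
        refine integral_congr_ae ?_
        filter_upwards [hlei] with x hx
        rw [hx]
        simp only [Pi.add_apply, Pi.mul_apply]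
        ring
      have hIdiv : - ∫ x, b.toFun (v * χ) x ∂m = ∫ x, h x * (v x * χ x) ∂m := by
        simpa [Pi.mul_apply] using hdivId
      linarith [hIeq, hIdiv]
    have hIu := Id u hu
    -- Lip0 membership and chain rule for the polynomial approximations
    have hPzero : ∀ n : ℕ, (fun x => (Pc ((M+1)^2) n).eval (u x) - (Pc ((M+1)^2) n).eval 0)
        = fun x => (Pc ((M+1)^2) n).eval (u x) := by
      intro n
      funext x
      rw [Pc_eval_zero]
      ring
    have hQmem : ∀ n : ℕ, (fun x => (Pc ((M+1)^2) n).eval (u x)) ∈ Lip0 X := by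
      intro n
      have h1 := (b_poly b hu (Pc ((M+1)^2) n)).1
      rwa [hPzero n] at h1
    have hQcr : ∀ n : ℕ, b.toFun (fun x => (Pc ((M+1)^2) n).eval (u x)) =ᵐ[m]
        fun x => Dc ((M+1)^2) n (u x) * b.toFun u x := by
      intro n
      have h1 := (b_poly b hu (Pc ((M+1)^2) n)).2
      rw [hPzero n] at h1
      refine h1.trans ?_
      filter_upwards with x
      rw [Pc_deriv]
    have hseql : ∀ n : ℕ, ∫ x, χ x * (Dc ((M+1)^2) n (u x) * b.toFun u x) ∂m
        = - ∫ x, h x * ((Pc ((M+1)^2) n).eval (u x) * χ x) ∂m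
          - ∫ x, (Pc ((M+1)^2) n).eval (u x) * b.toFun χ x ∂m := by
      intro n
      have h1 := Id _ (hQmem n)
      have h2 : ∫ x, χ x * b.toFun (fun y => (Pc ((M+1)^2) n).eval (u y)) x ∂m
          = ∫ x, χ x * (Dc ((M+1)^2) n (u x) * b.toFun u x) ∂m := by
        refine integral_congr_ae ?_
        filter_upwards [hQcr n] with x hx
        rw [hx]
      rw [h2] at h1
      exact h1
    have hDccont : ∀ n, Continuous fun t : ℝ => Dc ((M+1)^2) n t := by
      intro n
      unfold Dc
      fun_prop
    -- limit of the left-hand side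
    have hL1 : Tendsto (fun n => ∫ x, χ x * (Dc ((M+1)^2) n (u x) * b.toFun u x) ∂m) atTop
        (𝓝 (∫ x, Set.indicator Sᶜ (fun y => χ y * b.toFun u y) x ∂m)) := by
      refine tendsto_integral_of_dominated_convergence
        (fun x => Mχ * (3 * |b.toFun u x|)) (fun n => ?_) ?_ (fun n => ?_) ?_
      · exact hχcont.aestronglyMeasurable.mul
          ((((hDccont n).comp hucont).aestronglyMeasurable).mul hbu_int.aestronglyMeasurable)
      · exact (hbu_int.abs.const_mul 3).const_mul Mχ
      · filter_upwards with x
        rw [Real.norm_eq_abs, abs_mul, abs_mul]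
        have h1 : |Dc ((M+1)^2) n (u x)| ≤ 3 := Dc_bound hM0 (hM x) n
        have h2 : |χ x| ≤ Mχ := hMχ x
        have h3 : (0:ℝ) ≤ |b.toFun u x| := abs_nonneg _
        have h4 : |Dc ((M+1)^2) n (u x)| * |b.toFun u x| ≤ 3 * |b.toFun u x| :=
          mul_le_mul_of_nonneg_right h1 h3
        calc |χ x| * (|Dc ((M+1)^2) n (u x)| * |b.toFun u x|)
            ≤ Mχ * (|Dc ((M+1)^2) n (u x)| * |b.toFun u x|) := by
              apply mul_le_mul_of_nonneg_right h2
              positivity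
          _ ≤ Mχ * (3 * |b.toFun u x|) := mul_le_mul_of_nonneg_left h4 hMχ0
      · filter_upwards with x
        by_cases hx : u x = 0
        · have hxS : x ∈ Sᶜ → False := by
            intro hc
            exact hc hx
          have hind : Set.indicator Sᶜ (fun y => χ y * b.toFun u y) x = 0 :=
            Set.indicator_of_notMem (fun hc => hxS hc) _
          rw [hind]
          refine Tendsto.congr (fun n => ?_) tendsto_const_nhds
          rw [hx, Dc_zero]
          ring
        · have hxS : x ∈ Sᶜ := hx
          rw [Set.indicator_of_mem hxS]
          have h1 := Dc_tendsto hM0 (hM x) hx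
          have h2 := (h1.mul_const (b.toFun u x)).const_mul (χ x)
          rw [one_mul] at h2
          exact h2
    -- limit of the right-hand side
    have hL2a : Tendsto (fun n => ∫ x, h x * ((Pc ((M+1)^2) n).eval (u x) * χ x) ∂m) atTop
        (𝓝 (∫ x, h x * (u x * χ x) ∂m)) := by
      have hbb : Bornology.IsBounded (tsupport χ) := hχ.2
      refine tendsto_integral_of_dominated_convergence
        ((tsupport χ).indicator (fun y => |h y| * (M * Mχ))) (fun n => ?_) ?_ (fun n => ?_) ?_
      · exact hhloc.1.aestronglyMeasurable.mul
          ((((Pc ((M+1)^2) n).continuous).comp hucont).mul hχcont).aestronglyMeasurable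
      · exact MeasureTheory.IntegrableOn.integrable_indicator
          ((hhloc.2 (tsupport χ) hbb).abs.mul_const (M * Mχ))
          (isClosed_tsupport χ).measurableSet
      · filter_upwards with x
        by_cases hx : x ∈ tsupport χ
        · rw [Set.indicator_of_mem hx]
          rw [Real.norm_eq_abs, abs_mul, abs_mul]
          have h1 : |(Pc ((M+1)^2) n).eval (u x)| ≤ M := Pc_eval_bound hM0 (hM x) n
          have h2 : |χ x| ≤ Mχ := hMχ x
          have h3 : |(Pc ((M+1)^2) n).eval (u x)| * |χ x| ≤ M * Mχ :=
            mul_le_mul h1 h2 (abs_nonneg _) hM0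
          exact mul_le_mul_of_nonneg_left h3 (abs_nonneg _)
        · have hχx : χ x = 0 := image_eq_zero_of_notMem_tsupport hx
          rw [Set.indicator_of_notMem hx, hχx]
          simp
      · filter_upwards with x
        have h1 := Pc_eval_tendsto hM0 (hM x)
        have h2 := (h1.mul_const (χ x)).const_mul (h x)
        exact h2
    have hL2b : Tendsto (fun n => ∫ x, (Pc ((M+1)^2) n).eval (u x) * b.toFun χ x ∂m) atTop
        (𝓝 (∫ x, u x * b.toFun χ x ∂m)) := by
      refine tendsto_integral_of_dominated_convergence
        (fun x => M * |b.toFun χ x|) (fun n => ?_) ?_ (fun n => ?_) ?_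
      · exact ((((Pc ((M+1)^2) n).continuous).comp hucont).aestronglyMeasurable).mul
          hbχ_int.aestronglyMeasurable
      · exact hbχ_int.abs.const_mul M
      · filter_upwards with x
        rw [Real.norm_eq_abs, abs_mul]
        exact mul_le_mul_of_nonneg_right (Pc_eval_bound hM0 (hM x) n) (abs_nonneg _)
      · filter_upwards with x
        exact (Pc_eval_tendsto hM0 (hM x)).mul_const (b.toFun χ x)
    have hR : Tendsto (fun n => - ∫ x, h x * ((Pc ((M+1)^2) n).eval (u x) * χ x) ∂m
        - ∫ x, (Pc ((M+1)^2) n).eval (u x) * b.toFun χ x ∂m) atTop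
        (𝓝 (- ∫ x, h x * (u x * χ x) ∂m - ∫ x, u x * b.toFun χ x ∂m)) :=
      hL2a.neg.sub hL2b
    have hL1' : Tendsto (fun n => - ∫ x, h x * ((Pc ((M+1)^2) n).eval (u x) * χ x) ∂m
        - ∫ x, (Pc ((M+1)^2) n).eval (u x) * b.toFun χ x ∂m) atTop
        (𝓝 (∫ x, Set.indicator Sᶜ (fun y => χ y * b.toFun u y) x ∂m)) :=
      hL1.congr fun n => hseql n
    have hmain : ∫ x, Set.indicator Sᶜ (fun y => χ y * b.toFun u y) x ∂m
        = ∫ x, χ x * b.toFun u x ∂m := by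
      have := tendsto_nhds_unique hL1' hR
      rw [this, ← hIu]
    -- conclude
    have hindint : Integrable (Set.indicator Sᶜ (fun y => χ y * b.toFun u y)) m :=
      hχbu_int.indicator hSmeas.compl
    have hsplit : ∫ x, Set.indicator S (fun y => χ y * b.toFun u y) x ∂m
        = ∫ x, χ x * b.toFun u x ∂m
          - ∫ x, Set.indicator Sᶜ (fun y => χ y * b.toFun u y) x ∂m := by
      rw [← integral_sub hχbu_int hindint]
      refine integral_congr_ae (ae_of_all _ fun x => ?_)
      by_cases hx : x ∈ S
      · have hx' : x ∉ Sᶜ := by simpa using hx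
        simp only [Set.indicator_of_mem hx, Set.indicator_of_notMem hx']
        ring
      · have hx' : x ∈ Sᶜ := by simpa using hx
        simp only [Set.indicator_of_notMem hx, Set.indicator_of_mem hx']
        ring
    have hfin : ∫ x, Set.indicator S (fun y => χ y * b.toFun u y) x ∂m = 0 := by
      rw [hsplit, hmain]
      ring
    rw [← hfin]
    refine integral_congr_ae (ae_of_all _ fun x => ?_)
    by_cases hx : x ∈ S
    · simp only [Set.indicator_of_mem hx]
      ring
    · simp only [Set.indicator_of_notMem hx]
      ring
  filter_upwards [key] with x hx hux
  have hxS : x ∈ S := hux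
  rw [Set.indicator_of_mem hxS] at hx
  simpa using hx

end StrongLocalityAux

/-- (Strong locality in `D(div)`, part (i).) For `b ∈ D(div)` and
Lipschitz `f, g : X → ℝ`, one has `b(f) = b(g)` `m`-a.e. on `{f = g}`. -/
theorem statement2 {X : Type*} [MetricSpace X] [MeasurableSpace X] [BorelSpace X]
    [TopologicalSpace.SeparableSpace X] [CompleteSpace X]
    (m : MeasureTheory.Measure X)
    (hm : ∀ s : Set X, Bornology.IsBounded s → m s < ∞)
    (b : MDerivation X m) (hb : b ∈ DDiv m)
    (f g : X → ℝ) (hf : ∃ K, LipschitzWith K f) (hg : ∃ K, LipschitzWith K g)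
    (bf bg : X → ℝ) (hbf : IsExtension m b f bf) (hbg : IsExtension m b g bg) :
    ∀ᵐ x ∂m, f x = g x → bf x = bg x := by
  rcases isEmpty_or_nonempty X with hX | hX
  · exact ae_of_all _ fun x => isEmptyElim x
  obtain ⟨z⟩ := hX
  have hcut : ∀ n : ℕ, ∃ χ : X → ℝ, χ ∈ Lip0 X ∧ (∀ x, 0 ≤ χ x ∧ χ x ≤ 1) ∧
      (∀ x, dist x z ≤ (n : ℝ) + 1 → χ x = 1) ∧
      tsupport χ ⊆ Metric.closedBall z ((n : ℝ) + 1 + 1) :=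
    fun n => cutoff_exists z (by linarith [lt_add_one ((n : ℝ) + 1)])
  choose cut hcut1 hcut2 hcut3 hcut4 using hcut
  have hF : ∀ n, cut n * f ∈ Lip0 X := fun n => lip0_mul_lip (hcut1 n) hf
  have hG : ∀ n, cut n * g ∈ Lip0 X := fun n => lip0_mul_lip (hcut1 n) hg
  have hun : ∀ n, (cut n * f) - (cut n * g) ∈ Lip0 X := by
    intro n
    have h1 := lip0_add (hF n) (lip0_smul (-1) (hG n))
    have heq : (cut n * f) + (-1 : ℝ) • (cut n * g) = (cut n * f) - (cut n * g) := by
      funext x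
      simp only [Pi.add_apply, Pi.smul_apply, Pi.sub_apply, Pi.mul_apply, smul_eq_mul]
      ring
    rwa [heq] at h1
  have hcore : ∀ n, ∀ᵐ x ∂m, ((cut n * f) - (cut n * g)) x = 0 →
      b.toFun ((cut n * f) - (cut n * g)) x = 0 :=
    fun n => core_locality b hb (hun n)
  have hsub : ∀ n, b.toFun ((cut n * f) - (cut n * g)) =ᵐ[m]
      fun x => b.toFun (cut n * f) x - b.toFun (cut n * g) x :=
    fun n => b_sub b (hF n) (hG n)
  have hall : ∀ᵐ x ∂m, ∀ n : ℕ,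
      ((((cut n * f) - (cut n * g)) x = 0 → b.toFun ((cut n * f) - (cut n * g)) x = 0) ∧
      (b.toFun ((cut n * f) - (cut n * g)) x
        = b.toFun (cut n * f) x - b.toFun (cut n * g) x) ∧
      (x ∈ interior {y | cut n y = 1} → bf x = b.toFun (cut n * f) x) ∧
      (x ∈ interior {y | cut n y = 1} → bg x = b.toFun (cut n * g) x)) := by
    rw [ae_all_iff]
    intro n
    filter_upwards [hcore n, hsub n, hbf.2 (cut n) (hcut1 n), hbg.2 (cut n) (hcut1 n)]
      with x h1 h2 h3 h4
    exact ⟨h1, h2, h3, h4⟩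
  filter_upwards [hall] with x hx hfg
  obtain ⟨n, hn⟩ := exists_nat_gt (dist x z)
  obtain ⟨h1, h2, h3, h4⟩ := hx n
  have hball : Metric.ball z ((n : ℝ) + 1) ⊆ {y | cut n y = 1} := by
    intro y hy
    rw [Metric.mem_ball] at hy
    exact hcut3 n y (le_of_lt hy)
  have hxint : x ∈ interior {y | cut n y = 1} :=
    interior_maximal hball Metric.isOpen_ball (by rw [Metric.mem_ball]; linarith)
  have hzero : ((cut n * f) - (cut n * g)) x = 0 := by
    simp only [Pi.sub_apply, Pi.mul_apply, hfg]
    ring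
  have h5 : b.toFun (cut n * f) x - b.toFun (cut n * g) x = 0 := by
    rw [← h2]
    exact h1 hzero
  rw [h3 hxint, h4 hxint]
  linarith


end DiMarino
end
end

section
/- Let 1 ≤ p < ∞ with conjugate exponent q. Suppose f ∈ L^p(X,m), g ∈ L^p(X,m), and there exist f_n ∈ Lip_0(X,d) with ‖f_n − f‖_{L^p} → 0 and ‖lip_a(f_n) − g‖_{L^p} → 0. Then for every b ∈ Der^q_q one has | ∫_X f · div b dm | ≤ ∫_X |b| · g dm. -/
open MeasureTheory Metric Filter Set
open scoped ENNReal NNReal Topology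

noncomputable section

namespace DiMarino

variable {X : Type*} [MetricSpace X]

variable [MeasurableSpace X]

section AuxLipA

variable {Y : Type*} [MetricSpace Y]

lemma lipOn_mono' (f : Y → ℝ) {s t : Set Y} (h : s ⊆ t) : lipOn f s ≤ lipOn f t :=
  iSup₂_le fun a ha => iSup₂_le fun c hc =>
    le_iSup₂_of_le a (h ha) (le_iSup₂_of_le c (h hc) le_rfl)

lemma lowerSemicontinuous_lipOn_ball (f : Y → ℝ) (r : ℝ) :
    LowerSemicontinuous fun x => lipOn f (ball x r) := by
  intro x c hc
  simp only [lipOn, lt_iSup_iff] at hc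
  obtain ⟨a, ha, b, hb, hab⟩ := hc
  have hop : IsOpen (ball a r ∩ ball b r) := isOpen_ball.inter isOpen_ball
  have hx : x ∈ ball a r ∩ ball b r := by
    constructor <;> rw [mem_ball, dist_comm] <;> [exact ha; exact hb]
  filter_upwards [hop.mem_nhds hx] with y hy
  refine hab.trans_le ?_
  have hay : a ∈ ball y r := by rw [mem_ball, dist_comm]; exact hy.1
  have hby : b ∈ ball y r := by rw [mem_ball, dist_comm]; exact hy.2
  exact le_iSup₂_of_le a hay (le_iSup₂_of_le b hby le_rfl)

lemma lipA_eq_iInf_nat (f : Y → ℝ) (x : Y) :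
    (⨅ (r : ℝ) (_ : 0 < r), lipOn f (ball x r)) =
      ⨅ n : ℕ, lipOn f (ball x (1 / (n + 1))) := by
  apply le_antisymm
  · exact le_iInf fun n => iInf₂_le (1 / (n + 1 : ℝ)) (by positivity)
  · refine le_iInf₂ fun r hr => ?_
    obtain ⟨n, hn⟩ := exists_nat_one_div_lt hr
    exact (iInf_le _ n).trans (lipOn_mono' f (ball_subset_ball hn.le))

lemma measurable_lipA [MeasurableSpace Y] [OpensMeasurableSpace Y] (f : Y → ℝ) :
    Measurable (lipA f) := by
  have h : lipA f = fun x => (⨅ n : ℕ, lipOn f (ball x (1 / (n + 1)))).toReal := by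
    funext x; rw [lipA, lipA_eq_iInf_nat]
  rw [h]
  exact ENNReal.measurable_toReal.comp
    (Measurable.iInf fun n => (lowerSemicontinuous_lipOn_ball f _).measurable)

end AuxLipA

/-- If `f_n ∈ Lip_0` converge to `f` in `L^p` with
`lip_a f_n → g` in `L^p`, then `|∫ f · div b dm| ≤ ∫ |b| · g dm` for every
`b ∈ Der^q_q`. -/
theorem statement8 {X : Type*} [MetricSpace X] [MeasurableSpace X] [BorelSpace X]
    [TopologicalSpace.SeparableSpace X] [CompleteSpace X]
    (m : MeasureTheory.Measure X)
    (hm : ∀ s : Set X, Bornology.IsBounded s → m s < ∞)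
    (p q : ℝ≥0∞) (hp1 : 1 ≤ p) (hpt : p ≠ ∞) (hpq : 1 / p + 1 / q = 1)
    (f g : X → ℝ) (hf : MemLp f p m) (hg : MemLp g p m)
    (fn : ℕ → X → ℝ) (hfn : ∀ n, fn n ∈ Lip0 X)
    (hconv : Filter.Tendsto (fun n => eLpNorm (fn n - f) p m) Filter.atTop (nhds 0))
    (hlip : Filter.Tendsto (fun n => eLpNorm (fun x => lipA (fn n) x - g x) p m)
      Filter.atTop (nhds 0))
    (b : MDerivation X m) (hb : b ∈ DerSet m q q)
    (d : X → ℝ) (hdmem : MemLp d q m) (hd : IsDivergence m b d)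
    (gb : X → ℝ) (hgb : IsMinimalLocality m b gb) :
    |∫ x, f x * d x ∂m| ≤ ∫ x, gb x * g x ∂m := by
  obtain ⟨hgb_loc, hgb_min⟩ := hgb
  obtain ⟨hgb_meas, hgb_nn, hgb_bd⟩ := hgb_loc
  obtain ⟨⟨g', hg'loc, hg'q⟩, -⟩ := hb
  have hp0 : p ≠ 0 := (zero_lt_one.trans_le hp1).ne'
  have hgbsm : AEStronglyMeasurable gb m := hgb_meas.aestronglyMeasurable
  -- `gb ∈ L^q`
  have hgbq : MemLp gb q m := by
    refine hg'q.mono hgbsm ?_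
    filter_upwards [hgb_min g' ⟨hg'loc.1, hg'loc.2.1, hg'loc.2.2⟩, hgb_nn] with x h1 h2
    rw [Real.norm_eq_abs, Real.norm_eq_abs, abs_of_nonneg h2]
    exact h1.trans (le_abs_self _)
  have hgbtop : eLpNorm gb q m ≠ ∞ := hgbq.2.ne
  -- measurability of `lipA (fn n)`
  have hlipm : ∀ n, Measurable (lipA (fn n)) := fun n => measurable_lipA _
  have hlipsm : ∀ n, AEStronglyMeasurable (fun x => lipA (fn n) x - g x) m :=
    fun n => (hlipm n).aestronglyMeasurable.sub hg.aestronglyMeasurable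
  -- `g ≥ 0` a.e.
  have hgnn : ∀ᵐ x ∂m, 0 ≤ g x := by
    have htm : TendstoInMeasure m (fun n x => lipA (fn n) x) atTop g :=
      tendstoInMeasure_of_tendsto_eLpNorm hp0
        (fun n => (hlipm n).aestronglyMeasurable) hg.aestronglyMeasurable hlip
    obtain ⟨ns, -, hae⟩ := htm.exists_seq_tendsto_ae
    filter_upwards [hae] with x hx
    exact ge_of_tendsto' hx fun i => ENNReal.toReal_nonneg
  -- conjugate exponents for Hölder at exponent 1
  have hpqr : (1 : ℝ≥0∞) / 1 = 1 / q + 1 / p := by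
    rw [add_comm, hpq, one_div_one]
  haveI hH : ENNReal.HolderTriple q p 1 := ⟨by simpa [one_div] using hpqr.symm⟩
  -- the main quantity
  set K : ℝ≥0∞ := ∫⁻ x, (‖gb x‖₊ : ℝ≥0∞) * ‖g x‖₊ ∂m with hKdef
  have hKle : K ≤ eLpNorm gb q m * eLpNorm g p m := by
    have h := eLpNorm_le_eLpNorm_mul_eLpNorm_of_nnnorm (p := q) (q := p) (r := 1) hgbsm hg.aestronglyMeasurable
      (fun a c => a * c) 1 (Eventually.of_forall fun x => by simp [nnnorm_mul])
    refine le_trans (le_of_eq ?_) (h.trans_eq (by simp))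
    rw [eLpNorm_one_eq_lintegral_enorm]
    exact lintegral_congr fun x => by rw [enorm_mul]; rfl
  have hKtop : K ≠ ∞ :=
    (hKle.trans_lt (ENNReal.mul_lt_top hgbq.2 hg.2)).ne
  -- per-`n` bound
  have key : ∀ n, ENNReal.ofReal |∫ x, d x * fn n x ∂m| ≤
      K + eLpNorm gb q m * eLpNorm (fun x => lipA (fn n) x - g x) p m := by
    intro n
    obtain ⟨hbint, hdint, heq⟩ := hd.2 (fn n) (hfn n)
    have h1 : |∫ x, d x * fn n x ∂m| = |∫ x, b.toFun (fn n) x ∂m| := by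
      rw [← heq, abs_neg]
    rw [h1, ← Real.norm_eq_abs, ofReal_norm]
    calc (‖∫ x, b.toFun (fn n) x ∂m‖₊ : ℝ≥0∞)
        ≤ ∫⁻ x, (‖b.toFun (fn n) x‖₊ : ℝ≥0∞) ∂m :=
          enorm_integral_le_lintegral_enorm _
      _ ≤ ∫⁻ x, ((‖gb x‖₊ : ℝ≥0∞) * ‖g x‖₊
            + (‖gb x‖₊ : ℝ≥0∞) * ‖lipA (fn n) x - g x‖₊) ∂m := by
          refine lintegral_mono_ae ?_
          filter_upwards [hgb_bd (fn n) (hfn n), hgb_nn] with x hx hnn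
          have h2 : (‖b.toFun (fn n) x‖₊ : ℝ≥0∞)
              ≤ (‖gb x‖₊ : ℝ≥0∞) * ‖lipA (fn n) x‖₊ := by
            rw [← ENNReal.coe_mul, ENNReal.coe_le_coe, ← nnnorm_mul,
              ← NNReal.coe_le_coe, coe_nnnorm, coe_nnnorm,
              Real.norm_eq_abs, Real.norm_eq_abs]
            exact hx.trans (le_abs_self _)
          have h3 : ((‖lipA (fn n) x‖₊ : ℝ≥0∞))
              ≤ (‖g x‖₊ : ℝ≥0∞) + ‖lipA (fn n) x - g x‖₊ := by
            rw [← ENNReal.coe_add, ENNReal.coe_le_coe, ← NNReal.coe_le_coe,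
              NNReal.coe_add, coe_nnnorm, coe_nnnorm, coe_nnnorm,
              Real.norm_eq_abs, Real.norm_eq_abs, Real.norm_eq_abs]
            have := abs_sub_abs_le_abs_sub (lipA (fn n) x) (g x)
            linarith
          calc (‖b.toFun (fn n) x‖₊ : ℝ≥0∞)
              ≤ (‖gb x‖₊ : ℝ≥0∞) * ‖lipA (fn n) x‖₊ := h2
            _ ≤ (‖gb x‖₊ : ℝ≥0∞) * ((‖g x‖₊ : ℝ≥0∞) + ‖lipA (fn n) x - g x‖₊) :=
                mul_le_mul_right h3 _
            _ = _ := by rw [mul_add]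
      _ = K + ∫⁻ x, (‖gb x‖₊ : ℝ≥0∞) * ‖lipA (fn n) x - g x‖₊ ∂m := by
          exact lintegral_add_left' (hgbsm.enorm.mul hg.aestronglyMeasurable.enorm) _
      _ ≤ K + eLpNorm gb q m * eLpNorm (fun x => lipA (fn n) x - g x) p m := by
          refine add_le_add le_rfl ?_
          have h := eLpNorm_le_eLpNorm_mul_eLpNorm_of_nnnorm (p := q) (q := p) (r := 1) hgbsm (hlipsm n)
            (fun a c => a * c) 1 (Eventually.of_forall fun x => by simp [nnnorm_mul])
          refine le_trans (le_of_eq ?_) (h.trans_eq (by simp))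
          rw [eLpNorm_one_eq_lintegral_enorm]
          exact lintegral_congr fun x => by rw [enorm_mul]; rfl
  -- `∫ d·fn n → ∫ d·f`
  have hdf : Integrable (fun x => d x * f x) m := by
    rw [← memLp_one_iff_integrable]
    refine ⟨hdmem.aestronglyMeasurable.mul hf.aestronglyMeasurable, ?_⟩
    have h := eLpNorm_le_eLpNorm_mul_eLpNorm_of_nnnorm (p := q) (q := p) (r := 1) hdmem.aestronglyMeasurable
      hf.aestronglyMeasurable (fun a c => a * c) 1
      (Eventually.of_forall fun x => by simp [nnnorm_mul])
    exact (h.trans_eq (by simp)).trans_lt (ENNReal.mul_lt_top hdmem.2 hf.2)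
  have hdconv : Tendsto (fun n => ∫ x, d x * fn n x ∂m) atTop
      (𝓝 (∫ x, d x * f x ∂m)) := by
    rw [tendsto_iff_dist_tendsto_zero]
    have hev : ∀ᶠ n in atTop, eLpNorm (fn n - f) p m < ∞ :=
      hconv.eventually (Iio_mem_nhds (by norm_num : (0 : ℝ≥0∞) < ∞))
    refine squeeze_zero' (g := fun n => (eLpNorm d q m * eLpNorm (fn n - f) p m).toReal)
      (Eventually.of_forall fun n => dist_nonneg) ?_ ?_
    · filter_upwards [hev] with n hn
      have hfnsm : AEStronglyMeasurable (fn n - f) m := by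
        obtain ⟨⟨Kn, hKn⟩, -⟩ := hfn n
        exact (hKn.continuous.aestronglyMeasurable.sub hf.aestronglyMeasurable)
      have hfn_int : Integrable (fun x => d x * fn n x) m := (hd.2 _ (hfn n)).2.1
      rw [Real.dist_eq, ← integral_sub hfn_int hdf]
      have hre : (fun x => d x * fn n x - d x * f x)
          = fun x => d x * (fn n x - f x) := by funext x; ring
      rw [hre]
      have h1 : ENNReal.ofReal |∫ x, d x * (fn n x - f x) ∂m|
          ≤ eLpNorm d q m * eLpNorm (fn n - f) p m := by
        rw [← Real.norm_eq_abs, ofReal_norm]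
        refine (enorm_integral_le_lintegral_enorm _).trans ?_
        rw [← eLpNorm_one_eq_lintegral_enorm]
        exact (eLpNorm_le_eLpNorm_mul_eLpNorm_of_nnnorm (p := q) (q := p) (r := 1) hdmem.aestronglyMeasurable
          hfnsm (fun a c => a * c) 1
          (Eventually.of_forall fun x => by simp [nnnorm_mul])).trans_eq (by simp)
      have hfin : eLpNorm d q m * eLpNorm (fn n - f) p m ≠ ∞ :=
        ENNReal.mul_ne_top hdmem.2.ne hn.ne
      exact (ENNReal.ofReal_le_iff_le_toReal hfin).mp h1
    · have h0 : Tendsto (fun n => eLpNorm d q m * eLpNorm (fn n - f) p m) atTop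
          (𝓝 0) := by
        simpa using ENNReal.Tendsto.const_mul hconv (Or.inr hdmem.2.ne)
      have := (ENNReal.tendsto_toReal (by norm_num : (0 : ℝ≥0∞) ≠ ∞)).comp h0
      simpa [Function.comp_def] using this
  -- pass to the limit
  have hmain : ENNReal.ofReal |∫ x, d x * f x ∂m| ≤ K := by
    have ha : Tendsto (fun n => ENNReal.ofReal |∫ x, d x * fn n x ∂m|) atTop
        (𝓝 (ENNReal.ofReal |∫ x, d x * f x ∂m|)) :=
      ENNReal.tendsto_ofReal hdconv.abs
    have hb2 : Tendsto
        (fun n => K + eLpNorm gb q m * eLpNorm (fun x => lipA (fn n) x - g x) p m)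
        atTop (𝓝 K) := by
      have h0 : Tendsto
          (fun n => eLpNorm gb q m * eLpNorm (fun x => lipA (fn n) x - g x) p m)
          atTop (𝓝 0) := by
        simpa using ENNReal.Tendsto.const_mul hlip (Or.inr hgbtop)
      simpa using tendsto_const_nhds.add h0
    exact le_of_tendsto_of_tendsto' ha hb2 key
  -- identify `K.toReal` with the right-hand side
  have hKeq : ∫ x, gb x * g x ∂m = K.toReal := by
    have hnn : 0 ≤ᵐ[m] fun x => gb x * g x := by
      filter_upwards [hgb_nn, hgnn] with x h1 h2 using mul_nonneg h1 h2
    rw [integral_eq_lintegral_of_nonneg_ae hnn (hgbsm.mul hg.aestronglyMeasurable)]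
    congr 1
    refine lintegral_congr_ae ?_
    filter_upwards [hgb_nn, hgnn] with x h1 h2
    rw [ENNReal.ofReal_mul h1, ← Real.enorm_eq_ofReal h1, ← Real.enorm_eq_ofReal h2]; rfl
  have hfd : |∫ x, f x * d x ∂m| = |∫ x, d x * f x ∂m| := by
    congr 1
    exact integral_congr_ae (Eventually.of_forall fun x => mul_comm _ _)
  rw [hfd, hKeq]
  exact (ENNReal.ofReal_le_iff_le_toReal hKtop).mp hmain


end DiMarino
end
end
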